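/- Under the Volterra equation hypotheses, for any increasing sequence a(n) → ∞ and any ρ ∈ [0, ∞], the statements limsup |H(n)|/a(n) = ρ, limsup H*(n)/a(n) = ρ, limsup |x(n)|/a(n) = ρ, and limsup x*(n)/a(n) = ρ are all equivalent. -/

import Mathlib

open Filter Finset Topology

/-- Running maximum of `g` over `{1,…,n}` (value `0` when `n = 0`). -/
noncomputable def runMax1 (g : ℕ → ℝ) (n : ℕ) : ℝ :=
  if h : 1 ≤ n then (Finset.Icc 1 n).sup' (Finset.nonempty_Icc.mpr h) g else 0

/-- Running maximum of `g` over `{0,…,n}`. -/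
noncomputable def runMax0 (g : ℕ → ℝ) (n : ℕ) : ℝ :=
  (Finset.Icc 0 n).sup' (Finset.nonempty_Icc.mpr (Nat.zero_le n)) g

lemma runMax1_eq (g : ℕ → ℝ) {n : ℕ} (h : 1 ≤ n) :
    runMax1 g n = (Finset.Icc 1 n).sup' (Finset.nonempty_Icc.mpr h) g := dif_pos h

lemma le_runMax0 (g : ℕ → ℝ) {j n : ℕ} (h : j ≤ n) : g j ≤ runMax0 g n :=
  Finset.le_sup' g (Finset.mem_Icc.mpr ⟨Nat.zero_le _, h⟩)

lemma le_runMax1 (g : ℕ → ℝ) {j n : ℕ} (h1 : 1 ≤ j) (h : j ≤ n) : g j ≤ runMax1 g n := by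
  rw [runMax1_eq g (le_trans h1 h)]
  exact Finset.le_sup' g (Finset.mem_Icc.mpr ⟨h1, h⟩)

lemma runMax1_le (g : ℕ → ℝ) {n : ℕ} (h : 1 ≤ n) {b : ℝ}
    (hb : ∀ j, 1 ≤ j → j ≤ n → g j ≤ b) : runMax1 g n ≤ b := by
  rw [runMax1_eq g h]
  exact Finset.sup'_le _ _ fun j hj => hb j (Finset.mem_Icc.mp hj).1 (Finset.mem_Icc.mp hj).2

lemma runMax0_le (g : ℕ → ℝ) {n : ℕ} {b : ℝ}
    (hb : ∀ j, j ≤ n → g j ≤ b) : runMax0 g n ≤ b :=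
  Finset.sup'_le _ _ fun j hj => hb j (Finset.mem_Icc.mp hj).2

lemma runMax0_mono (g : ℕ → ℝ) {m n : ℕ} (h : m ≤ n) : runMax0 g m ≤ runMax0 g n :=
  runMax0_le g fun j hj => le_runMax0 g (hj.trans h)

lemma sublin (f : ℝ → ℝ) (hf : Continuous f)
    (hsub : Filter.Tendsto (fun y => f y / y) (Filter.cocompact ℝ) (nhds 0)) :
    ∀ ε : ℝ, 0 < ε → ∃ K : ℝ, 0 ≤ K ∧ ∀ y, |f y| ≤ ε * |y| + K := by
  intro ε hε
  have h1 : ∀ᶠ y in cocompact ℝ, dist (f y / y) 0 < ε := Metric.tendsto_nhds.mp hsub ε hε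
  rw [Filter.eventually_iff, Filter.mem_cocompact] at h1
  obtain ⟨t, ht, hts⟩ := h1
  obtain ⟨M, hM⟩ := ht.isBounded.subset_closedBall 0
  obtain ⟨C, hC⟩ := (isCompact_closedBall (0:ℝ) (max M 0)).exists_bound_of_continuousOn
    hf.continuousOn
  refine ⟨max C 0, le_max_right _ _, fun y => ?_⟩
  by_cases hy : |y| ≤ max M 0
  · have h2 := hC y (by simpa [Real.closedBall_eq_Icc, abs_le] using abs_le.mp hy)
    have h3 : |f y| ≤ max C 0 := le_trans (by simpa using h2) (le_max_left _ _)
    nlinarith [abs_nonneg y]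
  · push_neg at hy
    have hy0 : y ∉ Metric.closedBall (0:ℝ) M := by
      simp only [Metric.mem_closedBall, Real.dist_eq, sub_zero]
      intro h; exact absurd (le_trans h (le_max_left _ _)) (not_le.mpr hy)
    have hmem : y ∈ {y | dist (f y / y) 0 < ε} := hts (fun h => hy0 (hM h))
    have hyne : (0:ℝ) < |y| := lt_of_le_of_lt (le_max_right M 0) hy
    have hdq : |f y| / |y| < ε := by simpa [Real.dist_eq, abs_div] using hmem
    have h2 : |f y| < ε * |y| := by
      calc |f y| = |f y| / |y| * |y| := by field_simp
      _ < ε * |y| := mul_lt_mul_of_pos_right hdq hyne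
    nlinarith [le_max_right C 0]

lemma ebdd (w : ℕ → EReal) : Filter.IsBoundedUnder (· ≤ ·) Filter.atTop w :=
  ⟨⊤, by simp⟩

lemma ecobdd (w : ℕ → EReal) : Filter.IsCoboundedUnder (· ≤ ·) Filter.atTop w :=
  ⟨⊥, fun a _ => bot_le⟩

lemma keylem (a : ℕ → ℝ) (hapos : ∀ n, 0 < a n) (ha : Tendsto a atTop atTop)
    (u v : ℕ → ℝ) (hu : ∀ᶠ n in atTop, 0 ≤ u n)
    (h1 : ∀ ε : ℝ, 0 < ε → ∀ c : ℝ, 0 < c → (∀ᶠ n in atTop, u n ≤ c * a n) →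
      ∃ C : ℝ, ∀ᶠ n in atTop, v n ≤ (1 + ε) * c * a n + C) :
    Filter.limsup (fun n => ((v n / a n : ℝ) : EReal)) atTop ≤
      Filter.limsup (fun n => ((u n / a n : ℝ) : EReal)) atTop := by
  set Lu := Filter.limsup (fun n => ((u n / a n : ℝ) : EReal)) atTop with hLu
  have hLu0 : (0 : EReal) ≤ Lu := by
    apply Filter.le_limsup_of_frequently_le _ (ebdd _)
    apply (hu.mono ?_).frequently
    intro n hn
    exact_mod_cast div_nonneg hn (hapos n).le
  by_contra hcon
  push_neg at hcon
  obtain ⟨c', hc'1, hc'2⟩ := EReal.exists_between_coe_real hcon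
  obtain ⟨d, hd1, hd2⟩ := EReal.exists_between_coe_real hc'1
  have hd0 : (0:ℝ) < d := by exact_mod_cast lt_of_le_of_lt hLu0 hd1
  have hdc' : d < c' := by exact_mod_cast hd2
  obtain ⟨d'', hd''1, hd''2⟩ := exists_between hdc'
  have hev : ∀ᶠ n in atTop, u n ≤ d * a n := by
    have h4 := Filter.eventually_lt_of_limsup_lt hd1 (ebdd _)
    filter_upwards [h4] with n hn
    have h5 : u n / a n < d := by exact_mod_cast hn
    linarith [(div_lt_iff₀ (hapos n)).mp h5]
  have hε : (0:ℝ) < d''/d - 1 := by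
    rw [sub_pos, lt_div_iff₀ hd0]; linarith
  obtain ⟨C, hC⟩ := h1 _ hε d hd0 hev
  have key : ∀ᶠ n in atTop, (v n / a n : ℝ) ≤ c' := by
    have hC' : ∀ᶠ n in atTop, C / a n ≤ c' - d'' := by
      have h2 : Tendsto (fun n => C / a n) atTop (nhds 0) :=
        Tendsto.div_atTop tendsto_const_nhds ha
      have h6 := Metric.tendsto_nhds.mp h2 (c' - d'') (by linarith)
      filter_upwards [h6] with n hn
      rw [Real.dist_eq, sub_zero] at hn
      exact (le_abs_self _).trans hn.le
    filter_upwards [hC, hC'] with n hn hn'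
    have h3 : (1 + (d''/d - 1)) * d = d'' := by field_simp; ring
    rw [h3] at hn
    have hpos := hapos n
    rw [div_le_iff₀ hpos]
    have h7 : C ≤ (c' - d'') * a n := by
      rw [div_le_iff₀ hpos] at hn'; linarith
    linarith
  have hfin : Filter.limsup (fun n => ((v n / a n : ℝ) : EReal)) atTop ≤ (c' : EReal) := by
    apply Filter.limsup_le_of_le (ecobdd _)
    filter_upwards [key] with n hn
    exact_mod_cast hn
  exact absurd (lt_of_lt_of_le hc'2 hfin) (lt_irrefl _)

lemma convbound (f : ℝ → ℝ) (k H x : ℕ → ℝ)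
    (hk : Summable (fun j => |k j|))
    (hx : ∀ n : ℕ, x (n + 1) = H (n + 1) + ∑ j ∈ Finset.range (n + 1), k (n - j) * f (x j))
    (ε₁ K : ℝ) (hε₁ : 0 ≤ ε₁) (hK : 0 ≤ K) (hfb : ∀ y, |f y| ≤ ε₁ * |y| + K) (n : ℕ) :
    |x (n + 1) - H (n + 1)| ≤ (∑' i, |k i|) * (ε₁ * runMax0 (fun j => |x j|) n + K) := by
  set X := runMax0 (fun j => |x j|) n with hXd
  have hX0 : (0:ℝ) ≤ X :=
    le_trans (abs_nonneg (x 0)) (by exact le_runMax0 (fun j => |x j|) (Nat.zero_le n))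
  set B := ε₁ * X + K with hB
  have hB0 : 0 ≤ B := by positivity
  have heq : x (n + 1) - H (n + 1) = ∑ j ∈ Finset.range (n + 1), k (n - j) * f (x j) := by
    rw [hx n]; ring
  rw [heq]
  calc |∑ j ∈ Finset.range (n + 1), k (n - j) * f (x j)|
      ≤ ∑ j ∈ Finset.range (n + 1), |k (n - j) * f (x j)| := Finset.abs_sum_le_sum_abs _ _
    _ ≤ ∑ j ∈ Finset.range (n + 1), |k (n - j)| * B := by
        apply Finset.sum_le_sum
        intro j hj
        rw [abs_mul]
        apply mul_le_mul_of_nonneg_left _ (abs_nonneg _)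
        calc |f (x j)| ≤ ε₁ * |x j| + K := hfb _
          _ ≤ B := by
              have : |x j| ≤ X := by
                exact le_runMax0 (fun j => |x j|) (Nat.lt_succ_iff.mp (Finset.mem_range.mp hj))
              rw [hB]; nlinarith
    _ = (∑ j ∈ Finset.range (n + 1), |k (n - j)|) * B := (Finset.sum_mul _ _ _).symm
    _ = (∑ j ∈ Finset.range (n + 1), |k j|) * B := by
        congr 1
        have := Finset.sum_range_reflect (fun i => |k i|) (n + 1)
        simpa using this
    _ ≤ (∑' i, |k i|) * B :=
        mul_le_mul_of_nonneg_right (Summable.sum_le_tsum _ (fun i _ => abs_nonneg _) hk) hB0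

set_option maxHeartbeats 1600000 in
theorem stmt12
(f : ℝ → ℝ) (k H x : ℕ → ℝ) (ξ : ℝ)
    (hf : Continuous f)
    (hsub : Filter.Tendsto (fun y => f y / y) (Filter.cocompact ℝ) (nhds 0))
    (hk : Summable (fun j => |k j|))
    (hx0 : x 0 = ξ)
    (hx : ∀ n : ℕ, x (n + 1) = H (n + 1) + ∑ j ∈ Finset.range (n + 1), k (n - j) * f (x j))
    (a : ℕ → ℝ) (hmono : Monotone a) (hapos : ∀ n, 0 < a n)
    (ha : Filter.Tendsto a Filter.atTop Filter.atTop)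
    (ρ : EReal) (hρ : 0 ≤ ρ) :
    List.TFAE
      [Filter.limsup (fun n => ((|H n| / a n : ℝ) : EReal)) Filter.atTop = ρ,
       Filter.limsup (fun n => ((runMax1 (fun j => |H j|) n / a n : ℝ) : EReal))
         Filter.atTop = ρ,
       Filter.limsup (fun n => ((|x n| / a n : ℝ) : EReal)) Filter.atTop = ρ,
       Filter.limsup (fun n => ((runMax0 (fun j => |x j|) n / a n : ℝ) : EReal))
         Filter.atTop = ρ] := by
  have hT0 : (0:ℝ) ≤ ∑' i, |k i| := tsum_nonneg fun i => abs_nonneg _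
  set T := ∑' i, |k i| with hTd
  -- nonnegativity facts
  have hXnn : ∀ m, (0:ℝ) ≤ runMax0 (fun j => |x j|) m := fun m =>
    le_trans (abs_nonneg (x 0)) (by exact le_runMax0 (fun j => |x j|) (Nat.zero_le m))
  have hRHnn : ∀ᶠ n in atTop, (0:ℝ) ≤ runMax1 (fun j => |H j|) n := by
    refine eventually_atTop.mpr ⟨1, fun n hn => ?_⟩
    exact le_trans (abs_nonneg (H n)) (by exact le_runMax1 (fun j => |H j|) hn le_rfl)
  -- L1 ≤ L2 : keylem u = runMax1|H|, v = |H|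
  have e12 : Filter.limsup (fun n => ((|H n| / a n : ℝ) : EReal)) Filter.atTop ≤
      Filter.limsup (fun n => ((runMax1 (fun j => |H j|) n / a n : ℝ) : EReal)) Filter.atTop := by
    apply keylem a hapos ha _ _ hRHnn
    intro ε hε c hc hev
    obtain ⟨N, hN⟩ := eventually_atTop.mp hev
    refine ⟨0, eventually_atTop.mpr ⟨max N 1, fun n hn => ?_⟩⟩
    have hn1 : 1 ≤ n := le_trans (le_max_right N 1) hn
    have hnN : N ≤ n := le_trans (le_max_left N 1) hn
    have h1 : |H n| ≤ runMax1 (fun j => |H j|) n := by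
      exact le_runMax1 (fun j => |H j|) hn1 le_rfl
    have h2 := hN n hnN
    have h3 := hapos n
    nlinarith [mul_pos (mul_pos hε hc) h3]
  -- L2 ≤ L1 : keylem u = |H|, v = runMax1|H|
  have e21 : Filter.limsup (fun n => ((runMax1 (fun j => |H j|) n / a n : ℝ) : EReal))
      Filter.atTop ≤ Filter.limsup (fun n => ((|H n| / a n : ℝ) : EReal)) Filter.atTop := by
    apply keylem a hapos ha _ _ (Eventually.of_forall fun n => abs_nonneg (H n))
    intro ε hε c hc hev
    obtain ⟨N, hN⟩ := eventually_atTop.mp hev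
    refine ⟨runMax0 (fun j => |H j|) N, eventually_atTop.mpr ⟨max N 1, fun n hn => ?_⟩⟩
    have hn1 : 1 ≤ n := le_trans (le_max_right N 1) hn
    have hnN : N ≤ n := le_trans (le_max_left N 1) hn
    have hC0 : (0:ℝ) ≤ runMax0 (fun j => |H j|) N :=
      le_trans (abs_nonneg (H 0)) (by exact le_runMax0 (fun j => |H j|) (Nat.zero_le N))
    have han := hapos n
    have key : runMax1 (fun j => |H j|) n ≤ c * a n + runMax0 (fun j => |H j|) N := by
      apply runMax1_le _ hn1
      intro j hj1 hjn
      by_cases hjN : j ≤ N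
      · have h1 : |H j| ≤ runMax0 (fun j => |H j|) N := by
          exact le_runMax0 (fun j => |H j|) hjN
        nlinarith
      · push_neg at hjN
        have h1 := hN j hjN.le
        have h2 : a j ≤ a n := hmono hjn
        nlinarith
    nlinarith [mul_pos (mul_pos hε hc) han]
  -- L3 ≤ L4
  have e34 : Filter.limsup (fun n => ((|x n| / a n : ℝ) : EReal)) Filter.atTop ≤
      Filter.limsup (fun n => ((runMax0 (fun j => |x j|) n / a n : ℝ) : EReal)) Filter.atTop := by
    apply keylem a hapos ha _ _ (Eventually.of_forall hXnn)
    intro ε hε c hc hev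
    obtain ⟨N, hN⟩ := eventually_atTop.mp hev
    refine ⟨0, eventually_atTop.mpr ⟨N, fun n hn => ?_⟩⟩
    have h1 : |x n| ≤ runMax0 (fun j => |x j|) n := by
      exact le_runMax0 (fun j => |x j|) le_rfl
    have h2 := hN n hn
    have h3 := hapos n
    nlinarith [mul_pos (mul_pos hε hc) h3]
  -- L4 ≤ L3
  have e43 : Filter.limsup (fun n => ((runMax0 (fun j => |x j|) n / a n : ℝ) : EReal))
      Filter.atTop ≤ Filter.limsup (fun n => ((|x n| / a n : ℝ) : EReal)) Filter.atTop := by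
    apply keylem a hapos ha _ _ (Eventually.of_forall fun n => abs_nonneg (x n))
    intro ε hε c hc hev
    obtain ⟨N, hN⟩ := eventually_atTop.mp hev
    refine ⟨runMax0 (fun j => |x j|) N, eventually_atTop.mpr ⟨N, fun n hn => ?_⟩⟩
    have hC0 : (0:ℝ) ≤ runMax0 (fun j => |x j|) N := hXnn N
    have han := hapos n
    have key : runMax0 (fun j => |x j|) n ≤ c * a n + runMax0 (fun j => |x j|) N := by
      apply runMax0_le
      intro j hjn
      by_cases hjN : j ≤ N
      · have h1 : |x j| ≤ runMax0 (fun j => |x j|) N := by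
          exact le_runMax0 (fun j => |x j|) hjN
        show |x j| ≤ _
        nlinarith
      · push_neg at hjN
        have h1 := hN j hjN.le
        have h2 : a j ≤ a n := hmono hjn
        show |x j| ≤ _
        nlinarith
    nlinarith [mul_pos (mul_pos hε hc) han]
  -- L4 ≤ L2 : keylem u = runMax1|H|, v = runMax0|x|
  have e42 : Filter.limsup (fun n => ((runMax0 (fun j => |x j|) n / a n : ℝ) : EReal))
      Filter.atTop ≤
      Filter.limsup (fun n => ((runMax1 (fun j => |H j|) n / a n : ℝ) : EReal)) Filter.atTop := by
    apply keylem a hapos ha _ _ hRHnn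
    intro ε hε c hc hev
    obtain ⟨N, hN⟩ := eventually_atTop.mp hev
    set δ : ℝ := ε / (1 + ε) with hδd
    have hδ0 : (0:ℝ) < δ := by positivity
    have hδ1 : δ < 1 := by rw [hδd, div_lt_one (by linarith)]; linarith
    have hε₁0 : (0:ℝ) < δ / (T + 1) := by positivity
    obtain ⟨K, hK0, hKb⟩ := sublin f hf hsub _ hε₁0
    have hcb := convbound f k H x hk hx _ K hε₁0.le hK0 hKb
    rw [← hTd] at hcb
    refine ⟨(1 + ε) * (T * K + |x 0|), eventually_atTop.mpr ⟨max N 1, fun n hn => ?_⟩⟩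
    have hn1 : 1 ≤ n := le_trans (le_max_right N 1) hn
    have hnN : N ≤ n := le_trans (le_max_left N 1) hn
    have han := hapos n
    have hTε : (T : ℝ) * (δ / (T + 1)) ≤ δ := by
      have h6 : T / (T + 1) ≤ 1 := by rw [div_le_one (by linarith)]; linarith
      calc T * (δ / (T + 1)) = δ * (T / (T + 1)) := by ring
        _ ≤ δ * 1 := mul_le_mul_of_nonneg_left h6 hδ0.le
        _ = δ := mul_one δ
    have hstep : runMax0 (fun j => |x j|) n ≤
        c * a n + δ * runMax0 (fun j => |x j|) n + (T * K + |x 0|) := by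
      apply runMax0_le
      intro j hjn
      match j with
      | 0 =>
        show |x 0| ≤ _
        nlinarith [mul_pos hc han, mul_nonneg hδ0.le (hXnn n), mul_nonneg hT0 hK0]
      | (m+1) =>
        show |x (m+1)| ≤ _
        have hmn : m ≤ n := le_trans (Nat.le_succ m) hjn
        have h1 : |H (m+1)| ≤ runMax1 (fun j => |H j|) n := by
          exact le_runMax1 (fun j => |H j|) (Nat.succ_le_succ (Nat.zero_le m)) hjn
        have h2 := hN n hnN
        have h3 := hcb m
        have h4 : runMax0 (fun j => |x j|) m ≤ runMax0 (fun j => |x j|) n :=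
          runMax0_mono _ hmn
        have h5 : T * (δ / (T + 1) * runMax0 (fun j => |x j|) m + K) ≤
            δ * runMax0 (fun j => |x j|) n + T * K := by
          nlinarith [hXnn m, hXnn n, mul_nonneg hδ0.le (sub_nonneg.mpr h4)]
        have h7 : |x (m+1)| ≤ |H (m+1)| + |x (m+1) - H (m+1)| := by
          have := abs_sub_abs_le_abs_sub (x (m+1)) (H (m+1)); linarith
        linarith [abs_nonneg (x 0)]
    have hfin : runMax0 (fun j => |x j|) n * (1 - δ) ≤ c * a n + (T * K + |x 0|) := by
      nlinarith [hstep]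
    have h8 : (1 - δ) * (1 + ε) = 1 := by rw [hδd]; field_simp; ring
    calc runMax0 (fun j => |x j|) n
        = runMax0 (fun j => |x j|) n * ((1 - δ) * (1 + ε)) := by rw [h8]; ring
      _ = (runMax0 (fun j => |x j|) n * (1 - δ)) * (1 + ε) := by ring
      _ ≤ (c * a n + (T * K + |x 0|)) * (1 + ε) :=
          mul_le_mul_of_nonneg_right hfin (by linarith)
      _ = (1 + ε) * c * a n + (1 + ε) * (T * K + |x 0|) := by ring
  -- L2 ≤ L4 : keylem u = runMax0|x|, v = runMax1|H|
  have e24 : Filter.limsup (fun n => ((runMax1 (fun j => |H j|) n / a n : ℝ) : EReal))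
      Filter.atTop ≤
      Filter.limsup (fun n => ((runMax0 (fun j => |x j|) n / a n : ℝ) : EReal)) Filter.atTop := by
    apply keylem a hapos ha _ _ (Eventually.of_forall hXnn)
    intro ε hε c hc hev
    obtain ⟨N, hN⟩ := eventually_atTop.mp hev
    have hε₁0 : (0:ℝ) < ε / (T + 1) := by positivity
    obtain ⟨K, hK0, hKb⟩ := sublin f hf hsub _ hε₁0
    have hcb := convbound f k H x hk hx _ K hε₁0.le hK0 hKb
    rw [← hTd] at hcb
    refine ⟨T * K, eventually_atTop.mpr ⟨max N 1, fun n hn => ?_⟩⟩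
    have hn1 : 1 ≤ n := le_trans (le_max_right N 1) hn
    have hnN : N ≤ n := le_trans (le_max_left N 1) hn
    have han := hapos n
    apply runMax1_le _ hn1
    intro j hj1 hjn
    obtain ⟨m, rfl⟩ : ∃ m, j = m + 1 := ⟨j - 1, (Nat.succ_pred_eq_of_pos hj1).symm⟩
    show |H (m+1)| ≤ _
    have hmn : m ≤ n := le_trans (Nat.le_succ m) hjn
    have h3 := hcb m
    have h4 : |x (m+1)| ≤ runMax0 (fun j => |x j|) n := by
      exact le_runMax0 (fun j => |x j|) hjn
    have h5 : runMax0 (fun j => |x j|) m ≤ runMax0 (fun j => |x j|) n := runMax0_mono _ hmn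
    have h6 := hN n hnN
    have h7 : |H (m+1)| ≤ |x (m+1)| + |x (m+1) - H (m+1)| := by
      have := abs_sub_abs_le_abs_sub (H (m+1)) (x (m+1))
      rw [abs_sub_comm] at this; linarith
    have hTε : (T : ℝ) * (ε / (T + 1)) ≤ ε := by
      have h9 : T / (T + 1) ≤ 1 := by rw [div_le_one (by linarith)]; linarith
      calc T * (ε / (T + 1)) = ε * (T / (T + 1)) := by ring
        _ ≤ ε * 1 := mul_le_mul_of_nonneg_left h9 hε.le
        _ = ε := mul_one ε
    have h8 : T * (ε / (T + 1) * runMax0 (fun j => |x j|) m + K) ≤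
        ε * runMax0 (fun j => |x j|) n + T * K := by
      nlinarith [hXnn m, hXnn n, mul_nonneg hε.le (sub_nonneg.mpr h5)]
    have h9 : ε * runMax0 (fun j => |x j|) n ≤ ε * (c * a n) :=
      mul_le_mul_of_nonneg_left h6 hε.le
    nlinarith
  have E12 := le_antisymm e12 e21
  have E34 := le_antisymm e34 e43
  have E24 := le_antisymm e24 e42
  tfae_have 1 ↔ 2 := by rw [E12]
  tfae_have 3 ↔ 4 := by rw [E34]
  tfae_have 2 ↔ 4 := by rw [E24]
  tfae_finish
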